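/- Let Y : [0,∞) → ℝ be continuous, nonnegative, with lim_{t→∞} (1/t)∫₀ᵗ Y(s) ds = m > γ > 0, and let I : [0,∞) → (0,1) solve I'(t) = I(t)(1−I(t))Y(t) − γ I(t), I(0) = x ∈ (0,1). Then limsup_{t→∞} I(t) ≥ I* where I* = 1 − γ/m, i.e. the unique solution in (0,1) of 1/(1−I*) = m/γ. -/

import Mathlib

set_option maxHeartbeats 1000000


open MeasureTheory intervalIntegral Filter

/-- Persistence (upper-limit part): if the long-run average transmission rate `m > γ`, then
`limsup I(t) ≥ I* = 1 - γ/m`. -/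
theorem SIS_persistence_limsup (γ x m : ℝ) (hγ : 0 < γ) (hmγ : γ < m)
    (hx : x ∈ Set.Ioo (0:ℝ) 1)
    (Y I : ℝ → ℝ) (hYc : Continuous Y) (hY : ∀ t, 0 ≤ t → 0 ≤ Y t)
    (hm : Tendsto (fun t => (1 / t) * ∫ s in (0:ℝ)..t, Y s) atTop (nhds m))
    (hI0 : I 0 = x) (hIran : ∀ t, 0 ≤ t → I t ∈ Set.Ioo (0:ℝ) 1)
    (hode : ∀ t, 0 ≤ t → HasDerivAt I (I t * (1 - I t) * Y t - γ * I t) t) :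
    1 - γ / m ≤ limsup I atTop := by
  by_contra hcon
  push_neg at hcon
  have hm0 : (0:ℝ) < m := hγ.trans hmγ
  have hIstar0 : 0 < 1 - γ / m := by
    have : γ / m < 1 := (div_lt_one hm0).2 hmγ
    linarith
  have hIstar1 : 1 - γ / m < 1 := by
    have : 0 < γ / m := div_pos hγ hm0
    linarith
  -- I is eventually bounded above
  have hbdd : IsBoundedUnder (· ≤ ·) atTop I := by
    refine isBoundedUnder_of_eventually_le (a := 1) ?_
    filter_upwards [eventually_ge_atTop (0:ℝ)] with t ht
    exact (hIran t ht).2.le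
  obtain ⟨c₀, hc₀1, hc₀2⟩ := exists_between hcon
  have hev₀ : ∀ᶠ t in atTop, I t < c₀ := eventually_lt_of_limsup_lt hc₀1 hbdd
  set c : ℝ := max c₀ ((1 - γ / m) / 2) with hcdef
  have hc0 : 0 < c := lt_max_of_lt_right (by linarith)
  have hcI : c < 1 - γ / m := max_lt hc₀2 (by linarith)
  have hc1 : c < 1 := by linarith
  have h1c : 0 < 1 - c := by linarith
  have hγc : γ / (1 - c) < m := by
    rw [div_lt_iff₀ h1c]
    have h1 : m * c < m * (1 - γ / m) := (mul_lt_mul_iff_right₀ hm0).2 hcI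
    have h2 : m * (1 - γ / m) = m - γ := by field_simp
    nlinarith
  set δ : ℝ := m - γ / (1 - c) with hδdef
  have hδ0 : 0 < δ := by simp only [hδdef]; linarith
  have hev : ∀ᶠ t in atTop, I t < c :=
    hev₀.mono fun t ht => lt_of_lt_of_le ht (le_max_left _ _)
  obtain ⟨T₁, hT₁⟩ := eventually_atTop.1 hev
  set T : ℝ := max T₁ 0 with hTdef
  have hT0 : (0:ℝ) ≤ T := le_max_right _ _
  have hIc : ∀ t, T ≤ t → I t < c := fun t ht => hT₁ t ((le_max_left _ _).trans ht)
  -- the function g = log (I/(1-I)) and its derivative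
  have hgd : ∀ t, 0 ≤ t →
      HasDerivAt (fun u => Real.log (I u) - Real.log (1 - I u)) (Y t - γ / (1 - I t)) t := by
    intro t ht
    have hIt := hIran t ht
    have hI1 : (0:ℝ) < 1 - I t := by linarith [hIt.2]
    have h1 : HasDerivAt (fun u => Real.log (I u))
        ((I t * (1 - I t) * Y t - γ * I t) / I t) t := (hode t ht).log (ne_of_gt hIt.1)
    have h2 : HasDerivAt (fun u => (1:ℝ) - I u)
        (-(I t * (1 - I t) * Y t - γ * I t)) t := (hode t ht).const_sub 1
    have h3 : HasDerivAt (fun u => Real.log (1 - I u))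
        (-(I t * (1 - I t) * Y t - γ * I t) / (1 - I t)) t := h2.log (ne_of_gt hI1)
    have h4 := h1.sub h3
    have hIne : I t ≠ 0 := ne_of_gt hIt.1
    have h1ne : (1:ℝ) - I t ≠ 0 := ne_of_gt hI1
    refine h4.congr_deriv ?_
    field_simp
    ring
  -- primitive of Y
  have hFd : ∀ t : ℝ, HasDerivAt (fun u => ∫ s in (0:ℝ)..u, Y s) (Y t) t := fun t =>
    (hYc.integral_hasStrictDerivAt 0 t).hasDerivAt
  -- the auxiliary function h
  set h : ℝ → ℝ := fun u =>
    Real.log (I u) - Real.log (1 - I u) - (∫ s in (0:ℝ)..u, Y s) + γ / (1 - c) * u with hhdef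
  have hhd : ∀ t, 0 ≤ t → HasDerivAt h (γ / (1 - c) - γ / (1 - I t)) t := by
    intro t ht
    have h5 := ((hgd t ht).sub (hFd t)).add ((hasDerivAt_id t).const_mul (γ / (1 - c)))
    refine h5.congr_deriv ?_
    ring
  have hmono : MonotoneOn h (Set.Ici T) := by
    apply monotoneOn_of_deriv_nonneg (convex_Ici T)
    · intro t ht
      exact (hhd t (hT0.trans ht)).continuousAt.continuousWithinAt
    · rw [interior_Ici]
      intro t ht
      exact (hhd t (hT0.trans (le_of_lt ht))).differentiableAt.differentiableWithinAt
    · rw [interior_Ici]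
      intro t ht
      have htt : (0:ℝ) ≤ t := hT0.trans (le_of_lt ht)
      rw [(hhd t htt).deriv]
      have hIt := hIc t (le_of_lt ht)
      have hI1 : 0 < 1 - I t := by linarith [(hIran t htt).2]
      have : γ / (1 - I t) ≤ γ / (1 - c) :=
        div_le_div_of_nonneg_left hγ.le h1c (by linarith)
      linarith
  -- integral lower bound
  have hint : ∀ᶠ t in atTop, (m - δ / 2) * t ≤ ∫ s in (0:ℝ)..t, Y s := by
    have h1 : ∀ᶠ t in atTop, m - δ / 2 < (1 / t) * ∫ s in (0:ℝ)..t, Y s :=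
      hm.eventually (eventually_gt_nhds (by linarith))
    filter_upwards [h1, eventually_gt_atTop (0:ℝ)] with t ht ht0
    rw [one_div, inv_mul_eq_div] at ht
    exact ((lt_div_iff₀ ht0).1 ht).le
  obtain ⟨T₂, hT₂⟩ := eventually_atTop.1 hint
  -- upper bound on g for t ≥ T
  set B : ℝ := Real.log c - Real.log (1 - c) with hBdef
  have hgB : ∀ t, T ≤ t → Real.log (I t) - Real.log (1 - I t) ≤ B := by
    intro t ht
    have htt : (0:ℝ) ≤ t := hT0.trans ht
    have hIt := hIran t htt
    have hIc' := hIc t ht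
    have h1 : Real.log (I t) ≤ Real.log c := Real.log_le_log hIt.1 hIc'.le
    have h2 : Real.log (1 - c) ≤ Real.log (1 - I t) := Real.log_le_log h1c (by linarith)
    linarith
  -- the final contradiction
  set t : ℝ := max (max T T₂) ((B - h T) * (2 / δ) + 1) with htdef
  have htT : T ≤ t := (le_max_left _ _).trans (le_max_left _ _)
  have htT₂ : T₂ ≤ t := (le_max_right _ _).trans (le_max_left _ _)
  have htB : (B - h T) * (2 / δ) + 1 ≤ t := le_max_right _ _
  have hmon := hmono (Set.self_mem_Ici) (Set.mem_Ici.2 htT) htT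
  have hintt := hT₂ t htT₂
  have hgt := hgB t htT
  -- unfold h at hmon
  have hmon' : Real.log (I T) - Real.log (1 - I T) - (∫ s in (0:ℝ)..T, Y s) + γ / (1 - c) * T ≤
      Real.log (I t) - Real.log (1 - I t) - (∫ s in (0:ℝ)..t, Y s) + γ / (1 - c) * t := hmon
  have hhT : h T = Real.log (I T) - Real.log (1 - I T) - (∫ s in (0:ℝ)..T, Y s)
      + γ / (1 - c) * T := rfl
  have hδt : (m - δ / 2) * t - γ / (1 - c) * t = δ / 2 * t := by
    have : γ / (1 - c) = m - δ := by simp [hδdef]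
    rw [this]; ring
  have key : δ / 2 * ((B - h T) * (2 / δ) + 1) = (B - h T) + δ / 2 := by
    field_simp
  have hge : δ / 2 * ((B - h T) * (2 / δ) + 1) ≤ δ / 2 * t :=
    mul_le_mul_of_nonneg_left htB (by positivity)
  nlinarith [hge, key, hmon', hintt, hgt, hδt]
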